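/- Let (ξ,η) be a centered two-dimensional Gaussian random vector with covariance matrix Σ = [Σᵢⱼ] and Σ₁₁ = v₀ > 0, let H ∈ (0,1/2] and z ∈ ℝ. Then ∫₀¹ E[ (v₀(1−u))^{−1/2} · φ((z − √u·ξ)/√(v₀(1−u))) · u^H · v₀ · η ] du = (Σ₁₂ · z / (v₀·(H+3/2))) · √v₀ · φ(z/√v₀). -/

import Mathlib

open MeasureTheory Real Filter

/-- The standard normal density. -/
noncomputable def stdNormalPDF (x : ℝ) : ℝ :=
  (Real.sqrt (2 * Real.pi))⁻¹ * Real.exp (-(x ^ 2) / 2)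

/-- The standard normal cumulative distribution function. -/
noncomputable def stdNormalCDF (x : ℝ) : ℝ :=
  ∫ t in Set.Iic x, stdNormalPDF t


open ProbabilityTheory

open scoped NNReal ENNReal

lemma sqrt_two_pi_pos : 0 < Real.sqrt (2 * Real.pi) :=
  Real.sqrt_pos.2 (by positivity)

lemma stdNormalPDF_nonneg (x : ℝ) : 0 ≤ stdNormalPDF x := by
  unfold stdNormalPDF; positivity

lemma stdNormalPDF_le (x : ℝ) : stdNormalPDF x ≤ (Real.sqrt (2 * Real.pi))⁻¹ := by
  unfold stdNormalPDF
  calc (Real.sqrt (2 * Real.pi))⁻¹ * Real.exp (-(x ^ 2) / 2)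
      ≤ (Real.sqrt (2 * Real.pi))⁻¹ * 1 := by
        gcongr
        exact Real.exp_le_one_iff.2 (by nlinarith [sq_nonneg x])
    _ = _ := mul_one _

lemma continuous_stdNormalPDF : Continuous stdNormalPDF := by
  unfold stdNormalPDF; fun_prop

lemma integrable_stdNormalPDF : Integrable stdNormalPDF := by
  unfold stdNormalPDF
  refine Integrable.const_mul ?_ _
  have : (fun x : ℝ => Real.exp (-(x ^ 2) / 2)) = fun x => Real.exp (-(1/2 : ℝ) * x ^ 2) := by
    funext x; ring_nf
  rw [this]
  exact integrable_exp_neg_mul_sq (by norm_num)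

lemma integral_stdNormalPDF : ∫ x, stdNormalPDF x = 1 := by
  unfold stdNormalPDF
  rw [MeasureTheory.integral_const_mul]
  have : (fun x : ℝ => Real.exp (-(x ^ 2) / 2)) = fun x => Real.exp (-(1/2 : ℝ) * x ^ 2) := by
    funext x; ring_nf
  rw [this, integral_gaussian]
  rw [inv_mul_eq_one₀ (ne_of_gt sqrt_two_pi_pos)]
  rw [show Real.pi / (1/2) = 2 * Real.pi by ring]

lemma stdNormalCDF_nonneg (x : ℝ) : 0 ≤ stdNormalCDF x :=
  integral_nonneg fun t => stdNormalPDF_nonneg t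

lemma stdNormalCDF_le_one (x : ℝ) : stdNormalCDF x ≤ 1 := by
  rw [← integral_stdNormalPDF]
  exact setIntegral_le_integral integrable_stdNormalPDF
    (ae_of_all _ fun t => stdNormalPDF_nonneg t)

lemma hasDerivAt_stdNormalCDF (x : ℝ) : HasDerivAt stdNormalCDF (stdNormalPDF x) x := by
  have h : ∀ y : ℝ, stdNormalCDF y = stdNormalCDF 0 + ∫ t in (0:ℝ)..y, stdNormalPDF t := by
    intro y
    have := intervalIntegral.integral_Iic_sub_Iic
      (integrable_stdNormalPDF.integrableOn (s := Set.Iic 0))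
      (integrable_stdNormalPDF.integrableOn (s := Set.Iic y))
    unfold stdNormalCDF
    linarith [this]
  have h2 : HasDerivAt (fun y => stdNormalCDF 0 + ∫ t in (0:ℝ)..y, stdNormalPDF t)
      (stdNormalPDF x) x := by
    apply HasDerivAt.const_add
    apply intervalIntegral.integral_hasDerivAt_right
    · exact integrable_stdNormalPDF.intervalIntegrable
    · exact continuous_stdNormalPDF.stronglyMeasurable.stronglyMeasurableAtFilter
    · exact continuous_stdNormalPDF.continuousAt
  exact h2.congr_of_eventuallyEq (Filter.Eventually.of_forall h)

lemma tendsto_stdNormalCDF_atBot : Tendsto stdNormalCDF atBot (nhds 0) := by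
  have : stdNormalCDF = fun y => ∫ t, Set.indicator (Set.Iic y) stdNormalPDF t := by
    funext y
    unfold stdNormalCDF
    rw [← integral_indicator measurableSet_Iic]
  rw [this]
  have h0 : (∫ (_ : ℝ), (0:ℝ) ∂(volume)) = 0 := integral_zero _ _
  rw [← h0]
  apply tendsto_integral_filter_of_dominated_convergence stdNormalPDF
  · filter_upwards with y using
      ((integrable_stdNormalPDF.indicator measurableSet_Iic).aestronglyMeasurable)
  · filter_upwards with y
    filter_upwards with t
    rw [Set.indicator_apply]
    split_ifs
    · rw [Real.norm_eq_abs, abs_of_nonneg (stdNormalPDF_nonneg t)]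
    · simp [stdNormalPDF_nonneg t]
  · exact integrable_stdNormalPDF
  · filter_upwards with t
    have : ∀ᶠ y in atBot, Set.indicator (Set.Iic y) stdNormalPDF t = 0 := by
      filter_upwards [eventually_lt_atBot t] with y hy
      exact Set.indicator_of_notMem (by simpa using not_le.2 hy) _
    exact Tendsto.congr' (this.mono fun y hy => hy.symm) tendsto_const_nhds

lemma conv_identity {s w : ℝ} (hs : 0 < s) (hw : 0 < w) (m r : ℝ) :
    ∫ x : ℝ, (Real.sqrt s)⁻¹ * stdNormalPDF ((r - m * x) / Real.sqrt s)
      * ((Real.sqrt w)⁻¹ * stdNormalPDF (x / Real.sqrt w))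
    = (Real.sqrt (s + m ^ 2 * w))⁻¹ * stdNormalPDF (r / Real.sqrt (s + m ^ 2 * w)) := by
  set T : ℝ := s + m ^ 2 * w with hT
  have hTpos : 0 < T := by positivity
  set a : ℝ := T / (2 * s * w) with ha
  have hapos : 0 < a := by positivity
  set d : ℝ := m * w * r / T with hd
  have hs2 : Real.sqrt s ^ 2 = s := Real.sq_sqrt hs.le
  have hw2 : Real.sqrt w ^ 2 = w := Real.sq_sqrt hw.le
  have hT2 : Real.sqrt T ^ 2 = T := Real.sq_sqrt hTpos.le
  have hss : Real.sqrt s ≠ 0 := by positivity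
  have hws : Real.sqrt w ≠ 0 := by positivity
  have hexp : ∀ x : ℝ, -(((r - m * x) / Real.sqrt s) ^ 2) / 2 + -((x / Real.sqrt w) ^ 2) / 2
      = -(r ^ 2) / (2 * T) + -(a * (x - d) ^ 2) := by
    intro x
    rw [div_pow, div_pow, hs2, hw2, ha, hd]
    field_simp
    ring
  set K : ℝ := (Real.sqrt (2 * Real.pi))⁻¹ * (Real.sqrt (2 * Real.pi))⁻¹ * (Real.sqrt s)⁻¹
      * (Real.sqrt w)⁻¹ * Real.exp (-(r ^ 2) / (2 * T)) with hK
  have key : ∀ x : ℝ, (Real.sqrt s)⁻¹ * stdNormalPDF ((r - m * x) / Real.sqrt s)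
      * ((Real.sqrt w)⁻¹ * stdNormalPDF (x / Real.sqrt w))
      = K * Real.exp (-(a * (x - d) ^ 2)) := by
    intro x
    unfold stdNormalPDF
    rw [hK]
    rw [show (Real.sqrt s)⁻¹ * ((Real.sqrt (2 * Real.pi))⁻¹
        * Real.exp (-(((r - m * x) / Real.sqrt s) ^ 2) / 2))
      * ((Real.sqrt w)⁻¹ * ((Real.sqrt (2 * Real.pi))⁻¹
        * Real.exp (-((x / Real.sqrt w) ^ 2) / 2)))
      = (Real.sqrt (2 * Real.pi))⁻¹ * (Real.sqrt (2 * Real.pi))⁻¹ * (Real.sqrt s)⁻¹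
        * (Real.sqrt w)⁻¹ * (Real.exp (-(((r - m * x) / Real.sqrt s) ^ 2) / 2)
          * Real.exp (-((x / Real.sqrt w) ^ 2) / 2)) from by ring]
    rw [← Real.exp_add, hexp x, Real.exp_add]
    ring
  rw [show (fun x : ℝ => (Real.sqrt s)⁻¹ * stdNormalPDF ((r - m * x) / Real.sqrt s)
      * ((Real.sqrt w)⁻¹ * stdNormalPDF (x / Real.sqrt w)))
      = fun x : ℝ => K * Real.exp (-(a * (x - d) ^ 2)) from funext key]
  rw [MeasureTheory.integral_const_mul]
  have hshift : ∫ x : ℝ, Real.exp (-(a * (x - d) ^ 2)) = ∫ x : ℝ, Real.exp (-(a * x ^ 2)) :=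
    integral_sub_right_eq_self (fun x => Real.exp (-(a * x ^ 2))) d
  rw [hshift]
  have hgauss : ∫ x : ℝ, Real.exp (-(a * x ^ 2)) = Real.sqrt (Real.pi / a) := by
    have : (fun x : ℝ => Real.exp (-(a * x ^ 2))) = fun x => Real.exp (-a * x ^ 2) := by
      funext x; ring_nf
    rw [this, integral_gaussian]
  rw [hgauss]
  have hpa : Real.pi / a = (2 * Real.pi) * s * w / T := by
    rw [ha]; field_simp
  have hsq : Real.sqrt (Real.pi / a)
      = Real.sqrt (2 * Real.pi) * Real.sqrt s * Real.sqrt w / Real.sqrt T := by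
    rw [hpa, Real.sqrt_div (by positivity), Real.sqrt_mul (by positivity),
      Real.sqrt_mul (by positivity)]
  rw [hsq]
  unfold stdNormalPDF
  rw [div_pow, hT2]
  rw [hK]
  have h2pi : Real.sqrt (2 * Real.pi) ≠ 0 := by positivity
  have hTs : Real.sqrt T ≠ 0 := by positivity
  field_simp

lemma continuous_stdNormalCDF : Continuous stdNormalCDF :=
  continuous_iff_continuousAt.2 fun x => (hasDerivAt_stdNormalCDF x).continuousAt

lemma stdNormalCDF_lip (u v : ℝ) :
    |stdNormalCDF u - stdNormalCDF v| ≤ (Real.sqrt (2 * Real.pi))⁻¹ * |u - v| := by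
  have h : LipschitzWith ⟨(Real.sqrt (2 * Real.pi))⁻¹, by positivity⟩ stdNormalCDF := by
    apply lipschitzWith_of_nnnorm_deriv_le
      (fun x => (hasDerivAt_stdNormalCDF x).differentiableAt)
    intro x
    rw [(hasDerivAt_stdNormalCDF x).deriv]
    apply NNReal.coe_le_coe.1
    rw [coe_nnnorm, Real.norm_eq_abs,
      abs_of_nonneg (stdNormalPDF_nonneg x)]
    exact stdNormalPDF_le x
  have := h.dist_le_mul u v
  rw [Real.dist_eq, Real.dist_eq] at this
  exact this

lemma cdf_mix {s w : ℝ} (hs : 0 < s) (hw : 0 < w) (m z : ℝ) :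
    ∫ x : ℝ, stdNormalCDF ((z - m * x) / Real.sqrt s)
        * ((Real.sqrt w)⁻¹ * stdNormalPDF (x / Real.sqrt w))
      = stdNormalCDF (z / Real.sqrt (s + m ^ 2 * w)) := by
  set T : ℝ := s + m ^ 2 * w with hT
  have hTpos : 0 < T := by positivity
  set pdfw : ℝ → ℝ := fun x => (Real.sqrt w)⁻¹ * stdNormalPDF (x / Real.sqrt w) with hpdfw
  have hws : (Real.sqrt w) ≠ 0 := by positivity
  have hss : (Real.sqrt s) ≠ 0 := by positivity
  have pdfw_nonneg : ∀ x, 0 ≤ pdfw x := fun x =>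
    mul_nonneg (by positivity) (stdNormalPDF_nonneg _)
  have integrable_pdfw : Integrable pdfw :=
    ((integrable_stdNormalPDF.comp_div hws).const_mul _)
  have continuous_pdfw : Continuous pdfw := by
    apply Continuous.mul continuous_const
    exact continuous_stdNormalPDF.comp (continuous_id.div_const _)
  set L : ℝ → ℝ := fun z => ∫ x : ℝ, stdNormalCDF ((z - m * x) / Real.sqrt s) * pdfw x with hL
  set R : ℝ → ℝ := fun z => stdNormalCDF (z / Real.sqrt T) with hR
  have hA : ∀ z₀ : ℝ, HasDerivAt L ((Real.sqrt T)⁻¹ * stdNormalPDF (z₀ / Real.sqrt T)) z₀ := by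
    intro z₀
    have main := hasDerivAt_integral_of_dominated_loc_of_lip (μ := (volume : Measure ℝ))
      (F := fun t a => stdNormalCDF ((t - m * a) / Real.sqrt s) * pdfw a)
      (F' := fun a => stdNormalPDF ((z₀ - m * a) / Real.sqrt s) * (Real.sqrt s)⁻¹ * pdfw a)
      (x₀ := z₀) (bound := fun a => (Real.sqrt (2 * Real.pi))⁻¹ * (Real.sqrt s)⁻¹ * pdfw a)
      (s := Metric.ball z₀ 1) (Metric.ball_mem_nhds _ one_pos)
      ?_ ?_ ?_ ?_ ?_ ?_
    · have h2 := main.2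
      have heq : (∫ a : ℝ, stdNormalPDF ((z₀ - m * a) / Real.sqrt s) * (Real.sqrt s)⁻¹ * pdfw a)
          = (Real.sqrt T)⁻¹ * stdNormalPDF (z₀ / Real.sqrt T) := by
        rw [← conv_identity hs hw m z₀]
        congr 1
        funext a
        rw [hpdfw]
        ring
      rw [heq] at h2
      exact h2
    · filter_upwards with t
      exact ((continuous_stdNormalCDF.comp (by fun_prop)).mul continuous_pdfw).aestronglyMeasurable
    · apply Integrable.mono' integrable_pdfw
      · exact ((continuous_stdNormalCDF.comp (by fun_prop)).mul continuous_pdfw).aestronglyMeasurable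
      · filter_upwards with a
        rw [Real.norm_eq_abs, abs_mul, abs_of_nonneg (stdNormalCDF_nonneg _),
          abs_of_nonneg (pdfw_nonneg a)]
        calc stdNormalCDF ((z₀ - m * a) / Real.sqrt s) * pdfw a
            ≤ 1 * pdfw a := mul_le_mul_of_nonneg_right (stdNormalCDF_le_one _) (pdfw_nonneg a)
          _ = pdfw a := one_mul _
    · exact ((continuous_stdNormalPDF.comp (by fun_prop)).mul continuous_const |>.mul
        continuous_pdfw).aestronglyMeasurable
    · filter_upwards with a
      rw [lipschitzOnWith_iff_dist_le_mul]
      intro x _ y _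
      rw [Real.dist_eq, Real.dist_eq]
      have h1 : stdNormalCDF ((x - m * a) / Real.sqrt s) * pdfw a
          - stdNormalCDF ((y - m * a) / Real.sqrt s) * pdfw a
          = (stdNormalCDF ((x - m * a) / Real.sqrt s)
            - stdNormalCDF ((y - m * a) / Real.sqrt s)) * pdfw a := by ring
      rw [h1, abs_mul, abs_of_nonneg (pdfw_nonneg a)]
      have h2 := stdNormalCDF_lip ((x - m * a) / Real.sqrt s) ((y - m * a) / Real.sqrt s)
      have h3 : (x - m * a) / Real.sqrt s - (y - m * a) / Real.sqrt s
          = (x - y) / Real.sqrt s := by ring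
      rw [h3, abs_div, abs_of_nonneg (Real.sqrt_nonneg s)] at h2
      have h4 : ((Real.nnabs ((Real.sqrt (2 * Real.pi))⁻¹ * (Real.sqrt s)⁻¹ * pdfw a)) : ℝ)
          = (Real.sqrt (2 * Real.pi))⁻¹ * (Real.sqrt s)⁻¹ * pdfw a := by
        rw [Real.coe_nnabs, abs_of_nonneg]
        exact mul_nonneg (by positivity) (pdfw_nonneg a)
      rw [h4]
      calc |stdNormalCDF ((x - m * a) / Real.sqrt s)
            - stdNormalCDF ((y - m * a) / Real.sqrt s)| * pdfw a
          ≤ ((Real.sqrt (2 * Real.pi))⁻¹ * (|x - y| / Real.sqrt s)) * pdfw a :=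
            mul_le_mul_of_nonneg_right h2 (pdfw_nonneg a)
        _ = (Real.sqrt (2 * Real.pi))⁻¹ * (Real.sqrt s)⁻¹ * pdfw a * |x - y| := by
            field_simp
    · exact (integrable_pdfw.const_mul _)
    · filter_upwards with a
      have inner : HasDerivAt (fun t : ℝ => (t - m * a) / Real.sqrt s) ((Real.sqrt s)⁻¹) z₀ := by
        simpa [one_div] using ((hasDerivAt_id z₀).sub_const (m * a)).div_const (Real.sqrt s)
      have outer := (hasDerivAt_stdNormalCDF ((z₀ - m * a) / Real.sqrt s)).comp z₀ inner
      simpa [mul_comm] using outer.mul_const (pdfw a)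
  have hB : ∀ z₀ : ℝ, HasDerivAt R ((Real.sqrt T)⁻¹ * stdNormalPDF (z₀ / Real.sqrt T)) z₀ := by
    intro z₀
    have inner : HasDerivAt (fun t : ℝ => t / Real.sqrt T) ((Real.sqrt T)⁻¹) z₀ := by
      simpa [one_div] using (hasDerivAt_id z₀).div_const (Real.sqrt T)
    have h := (hasDerivAt_stdNormalCDF (z₀ / Real.sqrt T)).comp z₀ inner
    exact h.congr_deriv (mul_comm _ _)
  have hconst : ∀ x y : ℝ, L x - R x = L y - R y := by
    have hdiff : Differentiable ℝ (fun t => L t - R t) :=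
      fun t => ((hA t).sub (hB t)).differentiableAt
    have hderiv : ∀ t : ℝ, deriv (fun t => L t - R t) t = 0 := by
      intro t
      rw [show (fun t => L t - R t) = L - R from rfl, ((hA t).sub (hB t)).deriv]
      ring
    exact fun x y => is_const_of_deriv_eq_zero hdiff hderiv x y
  have hR0 : Tendsto R atBot (nhds 0) := by
    apply tendsto_stdNormalCDF_atBot.comp
    exact tendsto_id.atBot_div_const (Real.sqrt_pos.2 hTpos)
  have hL0 : Tendsto L atBot (nhds 0) := by
    have h0 : (∫ (_ : ℝ), (0:ℝ) ∂(volume)) = 0 := integral_zero _ _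
    rw [hL, ← h0]
    apply tendsto_integral_filter_of_dominated_convergence pdfw
    · filter_upwards with t
      exact ((continuous_stdNormalCDF.comp (by fun_prop)).mul continuous_pdfw).aestronglyMeasurable
    · filter_upwards with t
      filter_upwards with a
      rw [Real.norm_eq_abs, abs_mul, abs_of_nonneg (stdNormalCDF_nonneg _),
        abs_of_nonneg (pdfw_nonneg a)]
      calc stdNormalCDF ((t - m * a) / Real.sqrt s) * pdfw a
          ≤ 1 * pdfw a := mul_le_mul_of_nonneg_right (stdNormalCDF_le_one _) (pdfw_nonneg a)
        _ = pdfw a := one_mul _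
    · exact integrable_pdfw
    · filter_upwards with a
      have htend : Tendsto (fun t : ℝ => stdNormalCDF ((t - m * a) / Real.sqrt s)) atBot
          (nhds 0) := by
        apply tendsto_stdNormalCDF_atBot.comp
        exact (tendsto_atBot_add_const_right _ _ tendsto_id).atBot_div_const (Real.sqrt_pos.2 hs)
      simpa using htend.mul_const (pdfw a)
  have hzero : ∀ t : ℝ, L t - R t = 0 := by
    have hconst' : (fun t : ℝ => L t - R t) = fun _ => L 0 - R 0 :=
      funext fun x => hconst x 0
    have : Tendsto (fun t : ℝ => L t - R t) atBot (nhds 0) := by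
      simpa using hL0.sub hR0
    rw [hconst'] at this
    have h00 := tendsto_nhds_unique this tendsto_const_nhds
    exact fun t => (hconst t 0).trans h00.symm
  have := hzero z
  have heq : L z = R z := by linarith
  exact heq

/-- gaussianPDFReal in terms of stdNormalPDF -/
lemma gaussianPDFReal_eq_std (w : ℝ≥0) (hw : 0 < (w : ℝ)) (x : ℝ) :
    gaussianPDFReal 0 w x = ((Real.sqrt (w : ℝ))⁻¹ * stdNormalPDF (x / Real.sqrt (w : ℝ))) := by
  unfold gaussianPDFReal stdNormalPDF
  have h1 : Real.sqrt (2 * Real.pi * (w : ℝ)) = Real.sqrt (2 * Real.pi) * Real.sqrt (w : ℝ) :=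
    Real.sqrt_mul (by positivity) _
  have h2 : (x / Real.sqrt (w : ℝ)) ^ 2 = x ^ 2 / (w : ℝ) := by
    rw [div_pow, Real.sq_sqrt hw.le]
  rw [h1, h2]
  have hw' : (w : ℝ) ≠ 0 := ne_of_gt hw
  rw [mul_inv]
  rw [show -(x - 0) ^ 2 / (2 * (w : ℝ)) = -(x ^ 2 / (w : ℝ)) / 2 by field_simp; ring]
  ring

lemma integral_gaussianReal_eq (w : ℝ≥0) (hw : w ≠ 0) (f : ℝ → ℝ) :
    ∫ x, f x ∂(gaussianReal 0 w) = ∫ x, f x * gaussianPDFReal 0 w x := by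
  rw [gaussianReal_of_var_ne_zero _ hw]
  have hpdf : (gaussianPDF 0 w) = fun x => ((gaussianPDFReal 0 w x).toNNReal : ℝ≥0∞) := rfl
  rw [hpdf]
  rw [integral_withDensity_eq_integral_smul ((measurable_gaussianPDFReal 0 w).real_toNNReal) f]
  congr 1
  funext x
  rw [NNReal.smul_def, smul_eq_mul, Real.coe_toNNReal _ (gaussianPDFReal_nonneg 0 w x)]
  ring

lemma integrable_id_gaussianReal (m : ℝ) (v : ℝ≥0) : Integrable id (gaussianReal m v) := by
  by_cases hv : v = 0
  · rw [hv, gaussianReal_zero_var]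
    exact (integrable_const m).congr (ae_eq_dirac id).symm
  · rw [gaussianReal_of_var_ne_zero _ hv]
    have hpdf : (gaussianPDF m v) = fun x => ((gaussianPDFReal m v x).toNNReal : ℝ≥0∞) := rfl
    rw [hpdf]
    rw [integrable_withDensity_iff ((measurable_gaussianPDFReal m v).real_toNNReal.coe_nnreal_ennreal)
      (ae_of_all _ fun x => ENNReal.coe_lt_top)]
    have heq : (fun x : ℝ => id x * (((gaussianPDFReal m v x).toNNReal : ℝ≥0∞)).toReal)
        = fun x => x * gaussianPDFReal m v x := by
      funext x
      simp [Real.coe_toNNReal _ (gaussianPDFReal_nonneg m v x)]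
    rw [heq]
    unfold gaussianPDFReal
    have hv' : 0 < (v : ℝ) := by positivity
    have : (fun x : ℝ => x * ((Real.sqrt (2 * Real.pi * (v:ℝ)))⁻¹
        * Real.exp (-(x - m) ^ 2 / (2 * (v:ℝ)))))
        = fun x => (Real.sqrt (2 * Real.pi * (v:ℝ)))⁻¹
          * ((x - m) * Real.exp (-(1/(2*(v:ℝ))) * (x - m)^2) + m * Real.exp (-(1/(2*(v:ℝ))) * (x-m)^2)) := by
      funext x
      rw [show -(x - m) ^ 2 / (2 * (v:ℝ)) = -(1/(2*(v:ℝ))) * (x - m)^2 by field_simp]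
      ring
    rw [this]
    apply Integrable.const_mul
    apply Integrable.add
    · exact ((integrable_mul_exp_neg_mul_sq (by positivity : (0:ℝ) < 1/(2*(v:ℝ)))).comp_sub_right m)
    · exact ((integrable_exp_neg_mul_sq (by positivity : (0:ℝ) < 1/(2*(v:ℝ)))).comp_sub_right m).const_mul m

lemma gauss_inner
    {Ω : Type*} [MeasurableSpace Ω] (P : Measure Ω) [IsProbabilityMeasure P]
    (ξ η : Ω → ℝ) (hξ : Measurable ξ) (hη : Measurable η)
    (σ11 σ12 σ22 v₀ : ℝ) (hv₀ : 0 < v₀) (hσ11 : σ11 = v₀)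
    (hgauss : ∀ a b : ℝ,
      Measure.map (fun ω => a * ξ ω + b * η ω) P
        = gaussianReal 0 (Real.toNNReal (a ^ 2 * σ11 + 2 * a * b * σ12 + b ^ 2 * σ22)))
    (u : ℝ) (hu0 : 0 < u) (hu1 : u < 1) (z : ℝ) :
    ∫ ω, (Real.sqrt (v₀ * (1 - u)))⁻¹
        * stdNormalPDF ((z - Real.sqrt u * ξ ω) / Real.sqrt (v₀ * (1 - u))) * η ω ∂P
    = Real.sqrt u * σ12 * z * (Real.sqrt v₀)⁻¹ / v₀ * stdNormalPDF (z / Real.sqrt v₀) := by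
  set s : ℝ := v₀ * (1 - u) with hsdef
  have hs : 0 < s := mul_pos hv₀ (by linarith)
  have hsu : 0 < Real.sqrt u := Real.sqrt_pos.2 hu0
  have hss : (0:ℝ) < Real.sqrt s := Real.sqrt_pos.2 hs
  set g : ℝ → ℝ := fun x => (Real.sqrt s)⁻¹ * stdNormalPDF ((z - Real.sqrt u * x) / Real.sqrt s)
    with hgdef
  set G : ℝ → ℝ := fun x => -(Real.sqrt u)⁻¹
    * stdNormalCDF ((z - Real.sqrt u * x) / Real.sqrt s) with hGdef
  have continuous_G : Continuous G := by
    apply Continuous.mul continuous_const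
    exact continuous_stdNormalCDF.comp (by fun_prop)
  have continuous_g : Continuous g := by
    apply Continuous.mul continuous_const
    exact continuous_stdNormalPDF.comp (by fun_prop)
  have hG : ∀ x : ℝ, HasDerivAt G (g x) x := by
    intro x
    have inner : HasDerivAt (fun x : ℝ => (z - Real.sqrt u * x) / Real.sqrt s)
        (-(Real.sqrt u) / Real.sqrt s) x := by
      have h1 : HasDerivAt (fun x : ℝ => Real.sqrt u * x) (Real.sqrt u) x := by
        simpa using (hasDerivAt_id x).const_mul (Real.sqrt u)
      exact (h1.const_sub z).div_const _
    have outer := (hasDerivAt_stdNormalCDF ((z - Real.sqrt u * x) / Real.sqrt s)).comp x inner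
    have total := outer.const_mul (-(Real.sqrt u)⁻¹)
    refine total.congr_deriv ?_
    rw [hgdef]
    field_simp
  have hGbound : ∀ x : ℝ, |G x| ≤ (Real.sqrt u)⁻¹ := by
    intro x
    rw [hGdef]
    simp only [abs_mul, abs_neg, abs_inv, abs_of_nonneg (Real.sqrt_nonneg u)]
    calc (Real.sqrt u)⁻¹ * |stdNormalCDF ((z - Real.sqrt u * x) / Real.sqrt s)|
        ≤ (Real.sqrt u)⁻¹ * 1 := by
          gcongr
          rw [abs_of_nonneg (stdNormalCDF_nonneg _)]
          exact stdNormalCDF_le_one _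
      _ = (Real.sqrt u)⁻¹ := mul_one _
  have hGlip : ∀ x y : ℝ,
      |G x - G y| ≤ (Real.sqrt (2 * Real.pi))⁻¹ * (Real.sqrt s)⁻¹ * |x - y| := by
    intro x y
    have h1 : G x - G y = -(Real.sqrt u)⁻¹ * (stdNormalCDF ((z - Real.sqrt u * x) / Real.sqrt s)
        - stdNormalCDF ((z - Real.sqrt u * y) / Real.sqrt s)) := by rw [hGdef]; ring
    rw [h1, abs_mul, abs_neg, abs_inv, abs_of_nonneg (Real.sqrt_nonneg u)]
    have h2 := stdNormalCDF_lip ((z - Real.sqrt u * x) / Real.sqrt s)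
      ((z - Real.sqrt u * y) / Real.sqrt s)
    have h3 : (z - Real.sqrt u * x) / Real.sqrt s - (z - Real.sqrt u * y) / Real.sqrt s
        = Real.sqrt u * (y - x) / Real.sqrt s := by ring
    rw [h3, abs_div, abs_mul, abs_of_nonneg (Real.sqrt_nonneg u),
      abs_of_nonneg (Real.sqrt_nonneg s)] at h2
    calc (Real.sqrt u)⁻¹ * |stdNormalCDF ((z - Real.sqrt u * x) / Real.sqrt s)
          - stdNormalCDF ((z - Real.sqrt u * y) / Real.sqrt s)|
        ≤ (Real.sqrt u)⁻¹ * ((Real.sqrt (2 * Real.pi))⁻¹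
            * (Real.sqrt u * |y - x| / Real.sqrt s)) := by gcongr
      _ = (Real.sqrt (2 * Real.pi))⁻¹ * (Real.sqrt s)⁻¹ * |x - y| := by
          rw [abs_sub_comm y x]
          field_simp
  -- Integrability of η
  have hmapη : Measure.map η P = gaussianReal 0 (Real.toNNReal σ22) := by
    have h := hgauss 0 1
    have harg : (0:ℝ) ^ 2 * σ11 + 2 * 0 * 1 * σ12 + 1 ^ 2 * σ22 = σ22 := by ring
    rw [harg] at h
    have hfun : (fun ω => (0:ℝ) * ξ ω + 1 * η ω) = η := by funext ω; ring
    rwa [hfun] at h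
  have int_η : Integrable η P := by
    have hid := integrable_id_gaussianReal 0 (Real.toNNReal σ22)
    rw [← hmapη] at hid
    exact (integrable_map_measure hid.aestronglyMeasurable hη.aemeasurable).1 hid
  -- Integrability conditions
  have c1 : ∀ᶠ b in nhds (0:ℝ), AEStronglyMeasurable (fun ω => G (ξ ω + b * η ω)) P := by
    filter_upwards with b
    exact (continuous_G.measurable.comp (hξ.add (hη.const_mul b))).aestronglyMeasurable
  have c2 : Integrable (fun ω => G (ξ ω + (0:ℝ) * η ω)) P := by
    apply Integrable.mono' (integrable_const ((Real.sqrt u)⁻¹))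
    · exact (continuous_G.measurable.comp (hξ.add (hη.const_mul 0))).aestronglyMeasurable
    · filter_upwards with ω
      exact hGbound _
  have c3 : AEStronglyMeasurable (fun ω => g (ξ ω) * η ω) P :=
    ((continuous_g.measurable.comp hξ).mul hη).aestronglyMeasurable
  have c4 : ∀ᵐ ω ∂P, LipschitzOnWith
      (Real.nnabs ((Real.sqrt (2 * Real.pi))⁻¹ * (Real.sqrt s)⁻¹ * |η ω|))
      (fun b => G (ξ ω + b * η ω)) (Metric.ball (0:ℝ) 1) := by
    filter_upwards with ω
    rw [lipschitzOnWith_iff_dist_le_mul]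
    intro x _ y _
    rw [Real.dist_eq, Real.dist_eq]
    have h4 : ((Real.nnabs ((Real.sqrt (2 * Real.pi))⁻¹ * (Real.sqrt s)⁻¹ * |η ω|)) : ℝ)
        = (Real.sqrt (2 * Real.pi))⁻¹ * (Real.sqrt s)⁻¹ * |η ω| := by
      rw [Real.coe_nnabs, abs_of_nonneg]
      positivity
    rw [h4]
    calc |G (ξ ω + x * η ω) - G (ξ ω + y * η ω)|
        ≤ (Real.sqrt (2 * Real.pi))⁻¹ * (Real.sqrt s)⁻¹ * |(ξ ω + x * η ω) - (ξ ω + y * η ω)| :=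
          hGlip _ _
      _ = (Real.sqrt (2 * Real.pi))⁻¹ * (Real.sqrt s)⁻¹ * |η ω| * |x - y| := by
          rw [show (ξ ω + x * η ω) - (ξ ω + y * η ω) = η ω * (x - y) by ring, abs_mul]
          ring
  have c5 : Integrable (fun ω => (Real.sqrt (2 * Real.pi))⁻¹ * (Real.sqrt s)⁻¹ * |η ω|) P :=
    (int_η.abs.const_mul _)
  have c6 : ∀ᵐ ω ∂P, HasDerivAt (fun b => G (ξ ω + b * η ω)) (g (ξ ω) * η ω) 0 := by
    filter_upwards with ω
    have inner : HasDerivAt (fun b : ℝ => ξ ω + b * η ω) (η ω) 0 := by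
      simpa using ((hasDerivAt_id (0:ℝ)).mul_const (η ω)).const_add (ξ ω)
    have := (hG (ξ ω + 0 * η ω)).comp 0 inner
    simp only [zero_mul, add_zero] at this
    exact this
  have main := hasDerivAt_integral_of_dominated_loc_of_lip (μ := P)
    (F := fun b ω => G (ξ ω + b * η ω))
    (F' := fun ω => g (ξ ω) * η ω)
    (x₀ := 0)
    (bound := fun ω => (Real.sqrt (2 * Real.pi))⁻¹ * (Real.sqrt s)⁻¹ * |η ω|)
    (s := Metric.ball 0 1) (Metric.ball_mem_nhds _ one_pos) c1 c2 c3 c4 c5 c6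
  -- Step 2 : closed form of F near 0
  set q : ℝ → ℝ := fun b => σ11 + 2 * b * σ12 + b ^ 2 * σ22 with hqdef
  have hq0 : q 0 = v₀ := by rw [hqdef]; simp [hσ11]
  have hqcont : Continuous q := by rw [hqdef]; fun_prop
  have hev : ∀ᶠ b in nhds (0:ℝ), 0 < q b := by
    have := hqcont.continuousAt (x := (0:ℝ))
    rw [ContinuousAt, hq0] at this
    exact this.eventually (eventually_gt_nhds hv₀)
  have hFeq : (fun b => ∫ ω, G (ξ ω + b * η ω) ∂P)
      =ᶠ[nhds (0:ℝ)] fun b => -(Real.sqrt u)⁻¹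
        * stdNormalCDF (z / Real.sqrt (s + u * q b)) := by
    filter_upwards [hev] with b hb
    have hmapb := hgauss 1 b
    have harg : (1:ℝ) ^ 2 * σ11 + 2 * 1 * b * σ12 + b ^ 2 * σ22 = q b := by rw [hqdef]; ring
    rw [harg] at hmapb
    have hfun : (fun ω => (1:ℝ) * ξ ω + b * η ω) = fun ω => ξ ω + b * η ω := by
      funext ω; ring
    rw [hfun] at hmapb
    have hw0 : ((Real.toNNReal (q b)) : ℝ) = q b := Real.coe_toNNReal _ hb.le
    have hwne : Real.toNNReal (q b) ≠ 0 := by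
      simpa using (Real.toNNReal_pos.2 hb).ne'
    calc ∫ ω, G (ξ ω + b * η ω) ∂P
        = ∫ x, G x ∂(Measure.map (fun ω => ξ ω + b * η ω) P) := by
          exact (integral_map (hξ.add (hη.const_mul b)).aemeasurable
            continuous_G.aestronglyMeasurable).symm
      _ = ∫ x, G x ∂(gaussianReal 0 (Real.toNNReal (q b))) := by rw [hmapb]
      _ = ∫ x, G x * gaussianPDFReal 0 (Real.toNNReal (q b)) x :=
          integral_gaussianReal_eq _ hwne G
      _ = ∫ x, -(Real.sqrt u)⁻¹ * (stdNormalCDF ((z - Real.sqrt u * x) / Real.sqrt s)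
            * ((Real.sqrt (q b))⁻¹ * stdNormalPDF (x / Real.sqrt (q b)))) := by
          congr 1
          funext x
          rw [gaussianPDFReal_eq_std _ (by rw [hw0]; exact hb), hw0, hGdef]
          ring
      _ = -(Real.sqrt u)⁻¹ * ∫ x, stdNormalCDF ((z - Real.sqrt u * x) / Real.sqrt s)
            * ((Real.sqrt (q b))⁻¹ * stdNormalPDF (x / Real.sqrt (q b))) :=
          integral_const_mul _ _
      _ = -(Real.sqrt u)⁻¹ * stdNormalCDF (z / Real.sqrt (s + (Real.sqrt u) ^ 2 * q b)) := by
          rw [cdf_mix hs hb]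
      _ = -(Real.sqrt u)⁻¹ * stdNormalCDF (z / Real.sqrt (s + u * q b)) := by
          rw [Real.sq_sqrt hu0.le]
  -- Step 3 : derivative of the closed form at 0
  have hq' : HasDerivAt q (2 * σ12) 0 := by
    rw [hqdef]
    have h1 : HasDerivAt (fun b : ℝ => 2 * b * σ12) (2 * σ12) 0 := by
      simpa using (((hasDerivAt_id (0:ℝ)).const_mul 2).mul_const σ12)
    have h2 : HasDerivAt (fun b : ℝ => b ^ 2 * σ22) 0 0 := by
      simpa using ((hasDerivAt_pow 2 (0:ℝ)).mul_const σ22)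
    have h3 := (h1.add h2).const_add σ11
    have h4 : (fun b : ℝ => σ11 + (2 * b * σ12 + b ^ 2 * σ22))
        = fun b => σ11 + 2 * b * σ12 + b ^ 2 * σ22 := by funext b; ring
    simp only [Pi.add_apply] at h3
    rw [h4] at h3
    simpa using h3
  have hy : HasDerivAt (fun b => s + u * q b) (u * (2 * σ12)) 0 := by
    simpa using (hq'.const_mul u).const_add s
  have hy0 : s + u * q 0 = v₀ := by rw [hq0, hsdef]; ring
  have hsqrt : HasDerivAt (fun b => Real.sqrt (s + u * q b))
      (1 / (2 * Real.sqrt v₀) * (u * (2 * σ12))) 0 := by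
    have h := (Real.hasDerivAt_sqrt (by rw [hy0]; exact hv₀.ne')).comp 0 hy
    rw [hy0] at h
    exact h
  have hsv : Real.sqrt v₀ ≠ 0 := by positivity
  have hdiv : HasDerivAt (fun b => z / Real.sqrt (s + u * q b))
      ((0 * Real.sqrt v₀ - z * (1 / (2 * Real.sqrt v₀) * (u * (2 * σ12)))) / (Real.sqrt v₀) ^ 2)
      0 := by
    have h := (hasDerivAt_const (0:ℝ) z).div hsqrt (by rw [hy0]; exact hsv)
    rw [hy0] at h
    exact h
  have hpt : (fun b => z / Real.sqrt (s + u * q b)) 0 = z / Real.sqrt v₀ := by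
    simp only [hy0]
  have hcomp := (hasDerivAt_stdNormalCDF ((fun b => z / Real.sqrt (s + u * q b)) 0)).comp 0 hdiv
  rw [hpt] at hcomp
  have htotal : HasDerivAt (fun b => -(Real.sqrt u)⁻¹
      * stdNormalCDF (z / Real.sqrt (s + u * q b)))
      (-(Real.sqrt u)⁻¹ * (stdNormalPDF (z / Real.sqrt v₀)
        * ((0 * Real.sqrt v₀ - z * (1 / (2 * Real.sqrt v₀) * (u * (2 * σ12))))
          / (Real.sqrt v₀) ^ 2))) 0 := by
    simpa [Function.comp] using hcomp.const_mul (-(Real.sqrt u)⁻¹)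
  have hF2 : HasDerivAt (fun b => ∫ ω, G (ξ ω + b * η ω) ∂P)
      (-(Real.sqrt u)⁻¹ * (stdNormalPDF (z / Real.sqrt v₀)
        * ((0 * Real.sqrt v₀ - z * (1 / (2 * Real.sqrt v₀) * (u * (2 * σ12))))
          / (Real.sqrt v₀) ^ 2))) 0 :=
    htotal.congr_of_eventuallyEq hFeq
  have hED := main.2.unique hF2
  show ∫ ω, g (ξ ω) * η ω ∂P = _
  rw [hED]
  have hu2 : Real.sqrt u * Real.sqrt u = u := Real.mul_self_sqrt hu0.le
  have hv2 : Real.sqrt v₀ * Real.sqrt v₀ = v₀ := Real.mul_self_sqrt hv₀.le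
  rw [Real.sq_sqrt hv₀.le]
  set r := Real.sqrt u with hr
  rw [← hu2]
  have hr0 : r ≠ 0 := ne_of_gt hsu
  field_simp
  ring

/-- For a centered bivariate Gaussian `(ξ,η)` with `Var ξ = Σ₁₁ = v₀ > 0`,
`Cov(ξ,η) = Σ₁₂`, `Var η = Σ₂₂` (joint Gaussianity is expressed by: every linear
combination `a ξ + b η` is Gaussian with the corresponding variance), and
`H ∈ (0,1/2]`, `z ∈ ℝ`:
`∫₀¹ E[(v₀(1−u))^{−1/2} φ((z−√u ξ)/√(v₀(1−u))) u^H v₀ η] du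
  = (Σ₁₂ z/(v₀(H+3/2))) √v₀ φ(z/√v₀)`. -/
theorem gaussian_alpha_integral
    {Ω : Type*} [MeasurableSpace Ω] (P : Measure Ω) [IsProbabilityMeasure P]
    (ξ η : Ω → ℝ) (hξ : Measurable ξ) (hη : Measurable η)
    (σ11 σ12 σ22 v₀ : ℝ) (hv₀ : 0 < v₀) (hσ11 : σ11 = v₀)
    (hgauss : ∀ a b : ℝ,
      Measure.map (fun ω => a * ξ ω + b * η ω) P
        = gaussianReal 0 (Real.toNNReal (a ^ 2 * σ11 + 2 * a * b * σ12 + b ^ 2 * σ22)))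
    (H : ℝ) (hH : H ∈ Set.Ioc (0:ℝ) (1/2)) (z : ℝ) :
    (∫ u in (0:ℝ)..1, ∫ ω,
        (Real.sqrt (v₀ * (1 - u)))⁻¹
          * stdNormalPDF ((z - Real.sqrt u * ξ ω) / Real.sqrt (v₀ * (1 - u)))
          * (u ^ H * v₀ * η ω) ∂P)
      = σ12 * z / (v₀ * (H + 3/2)) * Real.sqrt v₀ * stdNormalPDF (z / Real.sqrt v₀) := by
  obtain ⟨hH0, hH1⟩ := hH
  set C : ℝ := σ12 * z * (Real.sqrt v₀)⁻¹ * stdNormalPDF (z / Real.sqrt v₀) with hC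
  have key : ∀ u : ℝ, u ∈ Set.Ioo (0:ℝ) 1 →
      (∫ ω, (Real.sqrt (v₀ * (1 - u)))⁻¹
          * stdNormalPDF ((z - Real.sqrt u * ξ ω) / Real.sqrt (v₀ * (1 - u)))
          * (u ^ H * v₀ * η ω) ∂P) = C * u ^ (H + 1/2) := by
    rintro u ⟨hu0, hu1⟩
    have hre : (fun ω => (Real.sqrt (v₀ * (1 - u)))⁻¹
          * stdNormalPDF ((z - Real.sqrt u * ξ ω) / Real.sqrt (v₀ * (1 - u)))
          * (u ^ H * v₀ * η ω))
        = fun ω => (u ^ H * v₀) * ((Real.sqrt (v₀ * (1 - u)))⁻¹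
          * stdNormalPDF ((z - Real.sqrt u * ξ ω) / Real.sqrt (v₀ * (1 - u))) * η ω) := by
      funext ω; ring
    rw [hre, integral_const_mul,
      gauss_inner P ξ η hξ hη σ11 σ12 σ22 v₀ hv₀ hσ11 hgauss u hu0 hu1 z]
    have hsqrt : Real.sqrt u = u ^ (1/2 : ℝ) := Real.sqrt_eq_rpow u
    have hadd : u ^ (H + 1/2 : ℝ) = u ^ H * u ^ (1/2 : ℝ) := Real.rpow_add hu0 _ _
    rw [hsqrt, hadd, hC]
    field_simp
  have h1 : (∫ u in (0:ℝ)..1, ∫ ω,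
        (Real.sqrt (v₀ * (1 - u)))⁻¹
          * stdNormalPDF ((z - Real.sqrt u * ξ ω) / Real.sqrt (v₀ * (1 - u)))
          * (u ^ H * v₀ * η ω) ∂P)
      = ∫ u in (0:ℝ)..1, C * u ^ (H + 1/2) := by
    apply intervalIntegral.integral_congr_ae
    have h1ne : ∀ᵐ x : ℝ, x ≠ 1 := by
      refine ae_iff.2 ?_
      have : {x : ℝ | ¬ x ≠ 1} = {1} := by ext x; simp
      rw [this]
      exact Real.volume_singleton
    filter_upwards [h1ne] with x hx hmem
    rw [Set.uIoc_of_le (zero_le_one)] at hmem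
    exact key x ⟨hmem.1, lt_of_le_of_ne hmem.2 hx⟩
  rw [h1, intervalIntegral.integral_const_mul]
  have hp : (-1 : ℝ) < H + 1/2 := by linarith
  rw [integral_rpow (Or.inl hp)]
  have h32 : H + 1/2 + 1 = H + 3/2 := by ring
  rw [h32, Real.one_rpow, Real.zero_rpow (by linarith : H + 3/2 ≠ 0)]
  have hv2 : Real.sqrt v₀ * Real.sqrt v₀ = v₀ := Real.mul_self_sqrt hv₀.le
  have hsv : Real.sqrt v₀ ≠ 0 := by positivity
  have hne : H + 3/2 ≠ 0 := by linarith
  rw [hC]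
  set sv := Real.sqrt v₀ with hsvdef
  rw [← hv2]
  have hsv0 : sv ≠ 0 := hsv
  field_simp
  ring
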